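/- arXiv:2002.10926 — 8 statements merged into one kernel-verified Lean document; each statement's English description precedes it below -/
import Mathlib

section
/- Sequential associativity of graph insertion: let V₁, V₂, V₃ be pairwise disjoint finite sets with distinguished elements *₁ ∈ V₁ and *₂ ∈ V₂, and let g₁, g₂, g₃ be simple graphs on V₁, V₂, V₃ respectively. Then (g₁ ∘_{*₁} g₂) ∘_{*₂} g₃ = g₁ ∘_{*₁} (g₂ ∘_{*₂} g₃), as elements of the free module on the set of simple graphs on (V₁ \ {*₁}) ∪ (V₂ \ {*₂}) ∪ V₃, where insertion is extended bilinearly to linear combinations of graphs. (This is one of the operad axioms in the theorem stating that graphs with insertion form an operad.) -/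
/-!
Common framework: a simple graph on a finite vertex set `V ⊆ α` is a finite set of
unordered pairs (`Sym2 α`) of distinct elements of `V`.  The insertion
`g₁ ∘_star g₂` is an element of the free `ℚ`-module `Finset (Sym2 α) →₀ ℚ`
on the set of edge sets.
-/

open scoped Classical

variable {α : Type*} [DecidableEq α]

/-- The finite edge set `g` is a simple graph on the vertex set `V`. -/
def IsGraphOn (V : Finset α) (g : Finset (Sym2 α)) : Prop :=
  ∀ e ∈ g, ¬ e.IsDiag ∧ ∀ v ∈ e, v ∈ V

/-- The two endpoints of an unordered pair, as a `Finset`. -/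
def sym2Finset : Sym2 α → Finset α :=
  Sym2.lift ⟨fun a b => {a, b}, by intro a b; simp [Finset.pair_comm]⟩

/-- Neighbours of `x` in the edge set `g`. -/
def nbrs (g : Finset (Sym2 α)) (x : α) : Finset α :=
  (g.biUnion sym2Finset).filter fun v => s(x, v) ∈ g

/-- Remove the vertex `x` (and all incident edges) from the edge set `g`. -/
def delG (g : Finset (Sym2 α)) (x : α) : Finset (Sym2 α) :=
  g.filter fun e => x ∉ e

/-- The edges `{v, f v}` obtained from a reconnection map `f : C → V₂`. -/
def newEdges (C V₂ : Finset α) (f : {v // v ∈ C} → {w // w ∈ V₂}) : Finset (Sym2 α) :=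
  Finset.univ.image fun v : {v // v ∈ C} => s(v.1, (f v).1)

/-- Insertion `g₁ ∘_star g₂` of a graph `g₂` on the vertex set `V₂` into a graph `g₁`:
the sum, over all maps `f` from the neighbours of `star` in `g₁` to `V₂`, of the graph
obtained by deleting `star` from `g₁`, adding `g₂`, and reconnecting along `f`. -/
noncomputable def ins (V₂ : Finset α) (star : α) (g₁ g₂ : Finset (Sym2 α)) :
    Finset (Sym2 α) →₀ ℚ :=
  ∑ f : ({v // v ∈ nbrs g₁ star} → {w // w ∈ V₂}),
    Finsupp.single (delG g₁ star ∪ g₂ ∪ newEdges (nbrs g₁ star) V₂ f) 1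

/-- Bilinear extension of the insertion to the free module on graphs. -/
noncomputable def insM (V₂ : Finset α) (star : α) (x y : Finset (Sym2 α) →₀ ℚ) :
    Finset (Sym2 α) →₀ ℚ :=
  x.sum fun g₁ c₁ => y.sum fun g₂ c₂ => (c₁ * c₂) • ins V₂ star g₁ g₂

lemma mem_sym2Finset {a : α} {e : Sym2 α} : a ∈ sym2Finset e ↔ a ∈ e := by
  induction e using Sym2.ind with
  | _ x y => simp [sym2Finset]

lemma mem_nbrs {g : Finset (Sym2 α)} {x v : α} : v ∈ nbrs g x ↔ s(x, v) ∈ g := by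
  constructor
  · exact fun h => (Finset.mem_filter.mp h).2
  · intro h
    exact Finset.mem_filter.mpr ⟨Finset.mem_biUnion.mpr ⟨_, h, mem_sym2Finset.mpr (by simp)⟩, h⟩

lemma mem_delG {g : Finset (Sym2 α)} {x : α} {e : Sym2 α} : e ∈ delG g x ↔ e ∈ g ∧ x ∉ e :=
  Finset.mem_filter

lemma mem_newEdges {C V : Finset α} {f : {v // v ∈ C} → {w // w ∈ V}} {e : Sym2 α} :
    e ∈ newEdges C V f ↔ ∃ v : {v // v ∈ C}, e = s(v.1, (f v).1) := by
  simp [newEdges, eq_comm]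

lemma insM_single_single (V : Finset α) (star : α) (a b : Finset (Sym2 α)) :
    insM V star (Finsupp.single a 1) (Finsupp.single b 1) = ins V star a b := by
  unfold insM
  rw [Finsupp.sum_single_index (by simp), Finsupp.sum_single_index (by simp)]
  simp

lemma insM_single_right (V : Finset α) (star : α) (x : Finset (Sym2 α) →₀ ℚ)
    (b : Finset (Sym2 α)) :
    insM V star x (Finsupp.single b 1) = x.sum fun a c => c • ins V star a b := by
  unfold insM
  refine Finsupp.sum_congr fun a _ => ?_
  rw [Finsupp.sum_single_index (by simp), mul_one]

lemma insM_single_left (V : Finset α) (star : α) (a : Finset (Sym2 α))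
    (y : Finset (Sym2 α) →₀ ℚ) :
    insM V star (Finsupp.single a 1) y = y.sum fun b c => c • ins V star a b := by
  unfold insM
  rw [Finsupp.sum_single_index (by simp)]
  simp only [one_mul]

lemma sum_single_smul {ι M : Type*} [AddCommMonoid M] [Module ℚ M] [Fintype ι]
    (G : ι → Finset (Sym2 α)) (F : Finset (Sym2 α) → M) :
    ((∑ i, Finsupp.single (G i) (1:ℚ)).sum fun a c => c • F a) = ∑ i, F (G i) := by
  rw [← Finsupp.sum_finset_sum_index (by simp) (fun a b₁ b₂ => add_smul b₁ b₂ (F a))]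
  refine Finset.sum_congr rfl fun i _ => ?_
  rw [Finsupp.sum_single_index (by simp), one_smul]

set_option maxHeartbeats 1000000 in
lemma core (V₁ V₂ V₃ : Finset α) (star₁ star₂ : α)
    (h12 : Disjoint V₁ V₂) (h13 : Disjoint V₁ V₃) (h23 : Disjoint V₂ V₃)
    (hstar₁ : star₁ ∈ V₁) (hstar₂ : star₂ ∈ V₂)
    (g₁ g₂ g₃ : Finset (Sym2 α))
    (hg₁ : IsGraphOn V₁ g₁) (hg₂ : IsGraphOn V₂ g₂) (hg₃ : IsGraphOn V₃ g₃) :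
    (∑ f : ({v // v ∈ nbrs g₁ star₁} → {w // w ∈ V₂}),
      ins V₃ star₂ (delG g₁ star₁ ∪ g₂ ∪ newEdges (nbrs g₁ star₁) V₂ f) g₃)
    = ∑ k : ({v // v ∈ nbrs g₂ star₂} → {w // w ∈ V₃}),
      ins (V₂.erase star₂ ∪ V₃) star₁ g₁
        (delG g₂ star₂ ∪ g₃ ∪ newEdges (nbrs g₂ star₂) V₃ k) := by
  have hs2V1 : star₂ ∉ V₁ := Finset.disjoint_right.mp h12 hstar₂
  have hs2V3 : star₂ ∉ V₃ := Finset.disjoint_left.mp h23 hstar₂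
  have hN₁V₁ : ∀ v, v ∈ nbrs g₁ star₁ → v ∈ V₁ := fun v hv =>
    (hg₁ _ (mem_nbrs.mp hv)).2 v (by simp)
  have hN₂V₂ : ∀ v, v ∈ nbrs g₂ star₂ → v ∈ V₂ := fun v hv =>
    (hg₂ _ (mem_nbrs.mp hv)).2 v (by simp)
  have hkey : ∀ (f : {v // v ∈ nbrs g₁ star₁} → {w // w ∈ V₂}) (u : α),
      u ∈ nbrs (delG g₁ star₁ ∪ g₂ ∪ newEdges (nbrs g₁ star₁) V₂ f) star₂ ↔
        u ∈ nbrs g₂ star₂ ∨ ∃ hv : u ∈ nbrs g₁ star₁, (f ⟨u, hv⟩).1 = star₂ := by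
    intro f u
    rw [mem_nbrs]
    simp only [Finset.mem_union, mem_newEdges, mem_delG]
    constructor
    · rintro ((⟨h, -⟩ | h) | ⟨v, hv⟩)
      · exact absurd ((hg₁ _ h).2 star₂ (by simp)) hs2V1
      · exact Or.inl (mem_nbrs.mpr h)
      · rw [Sym2.eq_iff] at hv
        rcases hv with ⟨h1, h2⟩ | ⟨h1, h2⟩
        · exact absurd (h1 ▸ hN₁V₁ _ v.2) hs2V1
        · subst h2
          exact Or.inr ⟨v.2, h1.symm⟩
    · rintro (h | ⟨hv, hfv⟩)
      · exact Or.inl (Or.inr (mem_nbrs.mp h))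
      · refine Or.inr ⟨⟨u, hv⟩, ?_⟩
        rw [hfv, Sym2.eq_swap]
  simp only [ins]
  rw [Finset.sum_sigma', Finset.univ_sigma_univ]
  refine (Fintype.sum_bijective
    (fun p : (Σ f : ({v // v ∈ nbrs g₁ star₁} → {w // w ∈ V₂}),
        ({v // v ∈ nbrs (delG g₁ star₁ ∪ g₂ ∪ newEdges (nbrs g₁ star₁) V₂ f) star₂} →
          {w // w ∈ V₃})) =>
      ((fun w => p.2 ⟨w.1, (hkey p.1 w.1).mpr (Or.inl w.2)⟩ :
          {v // v ∈ nbrs g₂ star₂} → {w // w ∈ V₃}),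
       (fun v => if hc : (p.1 v).1 = star₂ then
           ⟨(p.2 ⟨v.1, (hkey p.1 v.1).mpr (Or.inr ⟨v.2, hc⟩)⟩).1,
            Finset.mem_union_right _ (p.2 ⟨v.1, (hkey p.1 v.1).mpr (Or.inr ⟨v.2, hc⟩)⟩).2⟩
         else ⟨(p.1 v).1, Finset.mem_union_left _ (Finset.mem_erase.mpr ⟨hc, (p.1 v).2⟩)⟩ :
          {v // v ∈ nbrs g₁ star₁} → {w // w ∈ V₂.erase star₂ ∪ V₃})))
    ⟨?_, ?_⟩ _
    (fun q => Finsupp.single (delG g₁ star₁ ∪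
        (delG g₂ star₂ ∪ g₃ ∪ newEdges (nbrs g₂ star₂) V₃ q.1) ∪
        newEdges (nbrs g₁ star₁) (V₂.erase star₂ ∪ V₃) q.2) (1:ℚ)) ?_).trans
    (Fintype.sum_prod_type _)
  · -- injective
    rintro ⟨f₁, h₁⟩ ⟨f₂, h₂⟩ hEq
    simp only [Prod.mk.injEq] at hEq
    obtain ⟨hk, hf'⟩ := hEq
    have hf : f₁ = f₂ := by
      funext v
      have hv := congrFun hf' v
      by_cases hc1 : (f₁ v).1 = star₂ <;> by_cases hc2 : (f₂ v).1 = star₂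
      · exact Subtype.ext (hc1.trans hc2.symm)
      · rw [dif_pos hc1, dif_neg hc2] at hv
        have hval := congrArg Subtype.val hv
        exact absurd (hval ▸ (h₁ _).2) (Finset.disjoint_left.mp h23 (f₂ v).2)
      · rw [dif_neg hc1, dif_pos hc2] at hv
        have hval := congrArg Subtype.val hv
        exact absurd (f₁ v).2 (by rw [hval]; exact Finset.disjoint_right.mp h23 (h₂ _).2)
      · rw [dif_neg hc1, dif_neg hc2] at hv
        simp only [Subtype.mk.injEq] at hv
        exact Subtype.ext hv
    subst hf
    have hh : h₁ = h₂ := by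
      funext u
      rcases (hkey f₁ u.1).mp u.2 with hN | ⟨hv2, hfv⟩
      · exact congrFun hk ⟨u.1, hN⟩
      · have hv := congrFun hf' ⟨u.1, hv2⟩
        rw [dif_pos hfv, dif_pos hfv] at hv
        simp only [Subtype.mk.injEq] at hv
        exact Subtype.ext hv
    rw [hh]
  · -- surjective
    rintro ⟨k, f'⟩
    have hfmem : ∀ v : {v // v ∈ nbrs g₁ star₁}, (f' v).1 ∉ V₃ → (f' v).1 ∈ V₂ :=
      fun v hc => Finset.mem_of_mem_erase ((Finset.mem_union.mp (f' v).2).resolve_right hc)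
    set f : {v // v ∈ nbrs g₁ star₁} → {w // w ∈ V₂} := fun v =>
      if hc : (f' v).1 ∈ V₃ then ⟨star₂, hstar₂⟩ else ⟨(f' v).1, hfmem v hc⟩ with hfdef
    have hV₃' : ∀ (u : α) (hv : u ∈ nbrs g₁ star₁),
        (f ⟨u, hv⟩).1 = star₂ → (f' ⟨u, hv⟩).1 ∈ V₃ := by
      intro u hv hs
      by_contra hc
      rw [hfdef] at hs
      simp only [dif_neg hc] at hs
      exact (Finset.mem_erase.mp
        ((Finset.mem_union.mp (f' ⟨u, hv⟩).2).resolve_right hc)).1 hs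
    have hstar : ∀ (u : α),
        u ∈ nbrs (delG g₁ star₁ ∪ g₂ ∪ newEdges (nbrs g₁ star₁) V₂ f) star₂ →
        u ∉ nbrs g₂ star₂ → ∃ hv : u ∈ nbrs g₁ star₁, (f ⟨u, hv⟩).1 = star₂ :=
      fun u hu hN => ((hkey f u).mp hu).resolve_left hN
    refine ⟨⟨f, fun u => if hN : u.1 ∈ nbrs g₂ star₂ then k ⟨u.1, hN⟩ else
      ⟨(f' ⟨u.1, (hstar u.1 u.2 hN).choose⟩).1,
        hV₃' u.1 (hstar u.1 u.2 hN).choose (hstar u.1 u.2 hN).choose_spec⟩⟩, ?_⟩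
    refine Prod.ext ?_ ?_
    · funext w
      dsimp only
      simp only [dif_pos w.2]
    · funext v
      dsimp only
      by_cases hc3 : (f' v).1 ∈ V₃
      · have hfv : (f v).1 = star₂ := by rw [hfdef]; simp only [dif_pos hc3]
        rw [dif_pos hfv]
        apply Subtype.ext
        have hnN : v.1 ∉ nbrs g₂ star₂ :=
          fun hN => Finset.disjoint_left.mp h12 (hN₁V₁ _ v.2) (hN₂V₂ _ hN)
        simp only [dif_neg hnN]
      · have hne : (f v).1 ≠ star₂ := by
          rw [hfdef]; simp only [dif_neg hc3]
          exact (Finset.mem_erase.mp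
            ((Finset.mem_union.mp (f' v).2).resolve_right hc3)).1
        rw [dif_neg hne]
        apply Subtype.ext
        show (f v).1 = (f' v).1
        have hfe : f v = ⟨(f' v).1, hfmem v hc3⟩ := dif_neg hc3
        rw [hfe]
  · -- summand equality
    rintro ⟨f, h⟩
    show Finsupp.single _ (1:ℚ) = Finsupp.single _ (1:ℚ)
    congr 1
    ext e
    simp only [Finset.mem_union, mem_delG, mem_newEdges]
    constructor
    · rintro ((⟨(h1 | h2) | ⟨v, rfl⟩, hst⟩ | h3) | ⟨u, rfl⟩)
      · exact Or.inl (Or.inl h1)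
      · exact Or.inl (Or.inr (Or.inl (Or.inl ⟨h2, hst⟩)))
      · have hne : (f v).1 ≠ star₂ := fun hcc => hst (by rw [hcc]; simp)
        refine Or.inr ⟨v, ?_⟩
        rw [dif_neg hne]
      · exact Or.inl (Or.inr (Or.inl (Or.inr h3)))
      · rcases (hkey f u.1).mp u.2 with hN | ⟨hv, hfv⟩
        · exact Or.inl (Or.inr (Or.inr ⟨⟨u.1, hN⟩, rfl⟩))
        · refine Or.inr ⟨⟨u.1, hv⟩, ?_⟩
          rw [dif_pos hfv]
    · rintro ((h1 | ((h2 | h3) | ⟨w, rfl⟩)) | ⟨v, rfl⟩)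
      · have hst : star₂ ∉ e := fun hmem => hs2V1 ((hg₁ _ h1.1).2 _ hmem)
        exact Or.inl (Or.inl ⟨Or.inl (Or.inl h1), hst⟩)
      · exact Or.inl (Or.inl ⟨Or.inl (Or.inr h2.1), h2.2⟩)
      · exact Or.inl (Or.inr h3)
      · exact Or.inr ⟨⟨w.1, (hkey f w.1).mpr (Or.inl w.2)⟩, rfl⟩
      · by_cases hc : (f v).1 = star₂
        · refine Or.inr ⟨⟨v.1, (hkey f v.1).mpr (Or.inr ⟨v.2, hc⟩)⟩, ?_⟩
          rw [dif_pos hc]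
        · refine Or.inl (Or.inl ⟨Or.inr ⟨v, ?_⟩, ?_⟩)
          · rw [dif_neg hc]
          · rw [dif_neg hc]
            intro hmem
            rcases Sym2.mem_iff.mp hmem with h' | h'
            · exact hs2V1 (h' ▸ hN₁V₁ _ v.2)
            · exact hc h'.symm

/-- **Sequential associativity of graph insertion.** -/
theorem sequential_associativity_of_graph_insertion
    (V₁ V₂ V₃ : Finset α) (star₁ star₂ : α)
    (h12 : Disjoint V₁ V₂) (h13 : Disjoint V₁ V₃) (h23 : Disjoint V₂ V₃)
    (hstar₁ : star₁ ∈ V₁) (hstar₂ : star₂ ∈ V₂)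
    (g₁ g₂ g₃ : Finset (Sym2 α))
    (hg₁ : IsGraphOn V₁ g₁) (hg₂ : IsGraphOn V₂ g₂) (hg₃ : IsGraphOn V₃ g₃) :
    insM V₃ star₂ (insM V₂ star₁ (Finsupp.single g₁ 1) (Finsupp.single g₂ 1))
        (Finsupp.single g₃ 1)
      = insM (V₂.erase star₂ ∪ V₃) star₁ (Finsupp.single g₁ 1)
          (insM V₃ star₂ (Finsupp.single g₂ 1) (Finsupp.single g₃ 1)) := by
  rw [insM_single_single, insM_single_single, insM_single_right, insM_single_left]
  calc (ins V₂ star₁ g₁ g₂).sum (fun a c => c • ins V₃ star₂ a g₃)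
      = ∑ f : ({v // v ∈ nbrs g₁ star₁} → {w // w ∈ V₂}),
          ins V₃ star₂ (delG g₁ star₁ ∪ g₂ ∪ newEdges (nbrs g₁ star₁) V₂ f) g₃ :=
        sum_single_smul _ _
    _ = ∑ k : ({v // v ∈ nbrs g₂ star₂} → {w // w ∈ V₃}),
          ins (V₂.erase star₂ ∪ V₃) star₁ g₁
            (delG g₂ star₂ ∪ g₃ ∪ newEdges (nbrs g₂ star₂) V₃ k) :=
        core V₁ V₂ V₃ star₁ star₂ h12 h13 h23 hstar₁ hstar₂ g₁ g₂ g₃ hg₁ hg₂ hg₃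
    _ = (ins V₃ star₂ g₂ g₃).sum
          (fun b c => c • ins (V₂.erase star₂ ∪ V₃) star₁ g₁ b) :=
        (sum_single_smul _ _).symm
end

section
/- Right unit axiom of graph insertion: let V₁ be a finite set with a distinguished element * ∈ V₁, let g₁ be a simple graph on V₁, and let v be an element not in V₁. Then g₁ ∘_* X_v, where X_v is the one-vertex graph on {v} with no edges, is the single graph (with coefficient 1) obtained from g₁ by relabelling the vertex * as v. (This is one of the unit axioms in the theorem stating that graphs with insertion form an operad.) -/
/-!
Common framework: a simple graph on a finite vertex set `V ⊆ α` is a finite set of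
unordered pairs (`Sym2 α`) of distinct elements of `V`.  The insertion
`g₁ ∘_star g₂` is an element of the free `ℚ`-module `Finset (Sym2 α) →₀ ℚ`
on the set of edge sets.
-/

open scoped Classical

variable {α : Type*} [DecidableEq α]

/-- Relabelling of a graph along a map: each edge `{x, y}` becomes `{σ x, σ y}`. -/
def relabelG (σ : α → α) (g : Finset (Sym2 α)) : Finset (Sym2 α) :=
  g.image (Sym2.map σ)

/-- **Right unit axiom of graph insertion**: inserting the one-vertex, edgeless graph on
`{v}` at a vertex `star` of `g₁` gives the single graph obtained from `g₁` by relabelling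
the vertex `star` as `v`, with coefficient `1`. -/
theorem right_unit_axiom_of_graph_insertion
    (V₁ : Finset α) (star : α) (hstar : star ∈ V₁)
    (g₁ : Finset (Sym2 α)) (hg₁ : IsGraphOn V₁ g₁)
    (v : α) (hv : v ∉ V₁) :
    ins ({v} : Finset α) star g₁ (∅ : Finset (Sym2 α))
      = Finsupp.single (relabelG (fun x => if x = star then v else x) g₁) 1 := by
  haveI : Unique {w // w ∈ ({v} : Finset α)} :=
    ⟨⟨⟨v, Finset.mem_singleton_self v⟩⟩, fun w => Subtype.ext (Finset.mem_singleton.mp w.2)⟩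
  rw [ins, Fintype.sum_unique]
  congr 1
  ext e
  simp only [Finset.mem_union, delG, newEdges, Finset.mem_filter, Finset.notMem_empty,
    or_false, Finset.mem_image, Finset.mem_univ, true_and, relabelG, Subtype.exists]
  constructor
  · rintro ((⟨he, hse⟩) | ⟨w, hw, rfl⟩)
    · refine ⟨e, he, ?_⟩
      induction e using Sym2.ind with
      | _ x y =>
        simp only [Sym2.mem_iff, not_or] at hse
        simp [Sym2.map_pair_eq, if_neg (Ne.symm hse.1), if_neg (Ne.symm hse.2)]
    · have hw' : s(star, w) ∈ g₁ := (Finset.mem_filter.mp hw).2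
      have hws : w ≠ star := by
        intro h; subst h
        exact (hg₁ _ hw').1 (by simp [Sym2.isDiag_iff_proj_eq])
      exact ⟨s(star, w), hw', by simp [Sym2.map_pair_eq, if_neg hws, Sym2.eq_swap]; right; exact (Finset.mem_singleton.mp (default : {w // w ∈ ({v}:Finset α)}).2).symm⟩
  · rintro ⟨a, ha, rfl⟩
    induction a using Sym2.ind with
    | _ x y =>
      by_cases hs : star ∈ s(x, y)
      · rw [Sym2.mem_iff] at hs
        rcases hs with rfl | rfl
        · have hys : y ≠ star := by
            intro h; subst h; exact (hg₁ _ ha).1 (by simp [Sym2.isDiag_iff_proj_eq])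
          right
          refine ⟨y, ?_, ?_⟩
          · refine Finset.mem_filter.mpr ⟨Finset.mem_biUnion.mpr ⟨_, ha, ?_⟩, ha⟩
            simp [sym2Finset]
          · simp [Sym2.map_pair_eq, if_neg hys, Sym2.eq_swap]; right; exact Finset.mem_singleton.mp (default : {w // w ∈ ({v}:Finset α)}).2
        · have hxs : x ≠ star := by
            intro h; subst h; exact (hg₁ _ ha).1 (by simp [Sym2.isDiag_iff_proj_eq])
          right
          refine ⟨x, ?_, ?_⟩
          · refine Finset.mem_filter.mpr ⟨Finset.mem_biUnion.mpr ⟨_, ha, ?_⟩, ?_⟩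
            · simp [sym2Finset]
            · rwa [Sym2.eq_swap] at ha
          · simp [Sym2.map_pair_eq, if_neg hxs]; left; exact Finset.mem_singleton.mp (default : {w // w ∈ ({v}:Finset α)}).2
      · left
        simp only [Sym2.mem_iff, not_or] at hs
        refine ⟨?_, ?_⟩
        · simp only [Sym2.map_pair_eq, if_neg (Ne.symm hs.1), if_neg (Ne.symm hs.2)]
          exact ha
        · simp only [Sym2.map_pair_eq, if_neg (Ne.symm hs.1), if_neg (Ne.symm hs.2),
            Sym2.mem_iff, not_or]
          exact hs
end

section
/- Edge count of graphs in the support of an insertion: let V₁, V₂ be disjoint finite sets with * ∈ V₁ and let g₁, g₂ be simple graphs on V₁, V₂. Then every graph g in the support of g₁ ∘_* g₂ satisfies e(g) = e(g₁) + e(g₂), where e(·) denotes the number of edges. (This is the key remark in the proof of the lemma showing that graphs with too many edges cannot be generated nontrivially.) -/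
/-!
Common framework: a simple graph on a finite vertex set `V ⊆ α` is a finite set of
unordered pairs (`Sym2 α`) of distinct elements of `V`.  The insertion
`g₁ ∘_star g₂` is an element of the free `ℚ`-module `Finset (Sym2 α) →₀ ℚ`
on the set of edge sets.
-/

open scoped Classical

variable {α : Type*} [DecidableEq α]

/-- **Edge count of graphs in the support of an insertion**: every graph in the support of
`g₁ ∘_star g₂` has exactly `e(g₁) + e(g₂)` edges. -/
theorem edge_count_of_insertion_support
    (V₁ V₂ : Finset α) (star : α)
    (hd : Disjoint V₁ V₂) (hstar : star ∈ V₁)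
    (g₁ g₂ : Finset (Sym2 α)) (hg₁ : IsGraphOn V₁ g₁) (hg₂ : IsGraphOn V₂ g₂) :
    ∀ g ∈ (ins V₂ star g₁ g₂).support, g.card = g₁.card + g₂.card := by
  intro g hg
  classical
  rw [Finsupp.mem_support_iff, ins, Finsupp.finset_sum_apply] at hg
  obtain ⟨f, -, hf⟩ := Finset.exists_ne_zero_of_sum_ne_zero hg
  clear hg
  rw [Finsupp.single_apply] at hf
  have hgeq : g = delG g₁ star ∪ g₂ ∪ newEdges (nbrs g₁ star) V₂ f := by
    by_contra h; exact hf (if_neg fun h' => h h'.symm)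
  have hCmem : ∀ v ∈ (nbrs g₁ star), s(star, v) ∈ g₁ := by
    intro v hv; rw [nbrs, Finset.mem_filter] at hv; exact hv.2
  have hCV : ∀ v ∈ (nbrs g₁ star), v ∈ V₁ ∧ v ≠ star := by
    intro v hv
    obtain ⟨hnd, hmem⟩ := hg₁ _ (hCmem v hv)
    refine ⟨hmem v (by simp), fun h => hnd ?_⟩
    rw [h]; exact Sym2.mk_isDiag_iff.2 rfl
  -- endpoints facts
  have h1 : ∀ e ∈ delG g₁ star, ∀ v ∈ e, v ∈ V₁ := by
    intro e he v hv
    rw [delG, Finset.mem_filter] at he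
    exact (hg₁ e he.1).2 v hv
  have h2 : ∀ e ∈ g₂, ∀ v ∈ e, v ∈ V₂ := fun e he v hv => (hg₂ e he).2 v hv
  have h3 : ∀ e ∈ newEdges (nbrs g₁ star) V₂ f, ∃ v : {v // v ∈ (nbrs g₁ star)}, e = s(v.1, (f v).1) := by
    intro e he
    rw [newEdges, Finset.mem_image] at he
    obtain ⟨v, -, hv⟩ := he
    exact ⟨v, hv.symm⟩
  have hdV : ∀ v, v ∈ V₁ → v ∈ V₂ → False := fun v h h' =>
    Finset.disjoint_left.1 hd h h'
  -- disjointness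
  have hdisj1 : Disjoint (delG g₁ star) g₂ := by
    rw [Finset.disjoint_left]
    intro e he he2
    induction e using Sym2.ind with
    | _ a b => exact hdV a (h1 _ he a (by simp)) (h2 _ he2 a (by simp))
  have hdisj2 : Disjoint (delG g₁ star ∪ g₂) (newEdges (nbrs g₁ star) V₂ f) := by
    rw [Finset.disjoint_left]
    intro e he hen
    obtain ⟨v, rfl⟩ := h3 e hen
    rcases Finset.mem_union.1 he with h | h
    · exact hdV (f v).1 (h1 _ h _ (by simp)) (f v).2
    · exact hdV v.1 ((hCV v.1 v.2).1) (h2 _ h v.1 (by simp))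
  -- card of newEdges
  have hcardN : (newEdges (nbrs g₁ star) V₂ f).card = (nbrs g₁ star).card := by
    rw [newEdges, Finset.card_image_of_injective _ ?_, Finset.card_univ,
      Fintype.card_coe]
    intro v w hvw
    rw [Sym2.eq_iff] at hvw
    rcases hvw with ⟨h, -⟩ | ⟨h, -⟩
    · exact Subtype.ext h
    · exact absurd ((hCV v.1 v.2).1) (fun hv => hdV v.1 hv (h ▸ (f w).2))
  -- card of delG
  have hfilter : g₁.filter (fun e => star ∈ e) = (nbrs g₁ star).image (fun v => s(star, v)) := by
    ext e
    simp only [Finset.mem_filter, Finset.mem_image]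
    constructor
    · rintro ⟨he, hse⟩
      induction e using Sym2.ind with
      | _ a b =>
        rw [Sym2.mem_iff] at hse
        rcases hse with rfl | rfl
        · refine ⟨b, ?_, rfl⟩
          rw [nbrs, Finset.mem_filter]
          exact ⟨Finset.mem_biUnion.2 ⟨_, he, by simp [sym2Finset]⟩, he⟩
        · refine ⟨a, ?_, Sym2.eq_swap⟩
          rw [nbrs, Finset.mem_filter]
          refine ⟨Finset.mem_biUnion.2 ⟨_, he, by simp [sym2Finset]⟩, ?_⟩
          rwa [Sym2.eq_swap]
    · rintro ⟨v, hv, rfl⟩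
      exact ⟨hCmem v hv, by simp⟩
  have hcardD : (delG g₁ star).card + (nbrs g₁ star).card = g₁.card := by
    have := Finset.card_filter_add_card_filter_not
      (s := g₁) (p := fun e => star ∉ e)
    rw [delG]
    have h2' : (g₁.filter (fun e => ¬ star ∉ e)) = g₁.filter (fun e => star ∈ e) := by
      simp
    rw [h2', hfilter, Finset.card_image_of_injective] at this
    · exact this
    · intro v w hvw
      rw [Sym2.eq_iff] at hvw
      rcases hvw with ⟨-, h⟩ | ⟨h, h'⟩
      · exact h
      · exact h'.trans h
  rw [hgeq, Finset.card_union_of_disjoint hdisj2,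
    Finset.card_union_of_disjoint hdisj1, hcardN]
  omega
end

section
/- Graphs with too many edges cannot appear in the support of a partial composition: let g be a simple graph on a finite set V with |V| = n and with strictly more than C(n−1, 2) + 1 edges (where C(m, 2) = m(m−1)/2). Then for all disjoint finite sets V₁, V₂ with * ∈ V₁, |V₁| ≥ 2, |V₂| ≥ 2 and (V₁ \ {*}) ∪ V₂ = V, and for all simple graphs g₁ on V₁ and g₂ on V₂, the graph g does not belong to the support of g₁ ∘_* g₂. -/
/-!
Common framework: a simple graph on a finite vertex set `V ⊆ α` is a finite set of
unordered pairs (`Sym2 α`) of distinct elements of `V`.  The insertion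
`g₁ ∘_star g₂` is an element of the free `ℚ`-module `Finset (Sym2 α) →₀ ℚ`
on the set of edge sets.
-/

open scoped Classical

variable {α : Type*} [DecidableEq α]

lemma two_mul_choose_two (m : ℕ) : 2 * (m + 1).choose 2 = (m + 1) * m := by
  rw [Nat.choose_two_right]
  have h : 2 ∣ (m + 1) * ((m + 1) - 1) := by
    simp only [Nat.add_sub_cancel]
    rw [mul_comm]
    exact (Nat.even_mul_succ_self m).two_dvd
  rw [Nat.mul_div_cancel' h]
  congr 1

lemma arith_lemma (a b : ℕ) (ha : 1 ≤ a) (hb : 2 ≤ b) :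
    a.choose 2 + b.choose 2 + a ≤ (a + b - 1).choose 2 + 1 := by
  obtain ⟨a', rfl⟩ : ∃ a', a = a' + 1 := ⟨a - 1, by omega⟩
  obtain ⟨b', rfl⟩ : ∃ b', b = b' + 2 := ⟨b - 2, by omega⟩
  have he : a' + 1 + (b' + 2) - 1 = (a' + b' + 1) + 1 := by omega
  rw [he]
  have h1 := two_mul_choose_two a'
  have h2 : 2 * (b' + 2).choose 2 = (b' + 2) * (b' + 1) := two_mul_choose_two (b' + 1)
  have h3 := two_mul_choose_two (a' + b' + 1)
  nlinarith [Nat.zero_le (a' * b')]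

lemma sym2Finset_mk (a b : α) : sym2Finset s(a, b) = {a, b} := rfl

lemma sym2Finset_injOn {g : Finset (Sym2 α)} (hg : ∀ e ∈ g, ¬ e.IsDiag) :
    Set.InjOn sym2Finset (g : Set (Sym2 α)) := by
  intro e he e' he' heq
  induction e using Sym2.inductionOn with
  | hf a b =>
  induction e' using Sym2.inductionOn with
  | hf c d =>
  have hab : a ≠ b := by simpa using hg _ he
  have hcd : c ≠ d := by simpa using hg _ he'
  rw [sym2Finset_mk, sym2Finset_mk] at heq
  have ha : a ∈ ({c, d} : Finset α) := by rw [← heq]; simp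
  have hb : b ∈ ({c, d} : Finset α) := by rw [← heq]; simp
  simp only [Finset.mem_insert, Finset.mem_singleton] at ha hb
  rcases ha with rfl | rfl <;> rcases hb with rfl | rfl
  · exact absurd rfl hab
  · rfl
  · exact Sym2.eq_swap
  · exact absurd rfl hab

lemma card_le_of_isGraphOn (W : Finset α) (g : Finset (Sym2 α)) (h : IsGraphOn W g) :
    g.card ≤ Nat.choose W.card 2 := by
  have hinj : Set.InjOn sym2Finset (g : Set (Sym2 α)) := sym2Finset_injOn (fun e he => (h e he).1)
  calc g.card = (g.image sym2Finset).card := (Finset.card_image_of_injOn hinj).symm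
    _ ≤ (W.powersetCard 2).card := by
        apply Finset.card_le_card
        intro s hs
        rw [Finset.mem_image] at hs
        obtain ⟨e, he, rfl⟩ := hs
        obtain ⟨hdiag, hmem⟩ := h e he
        induction e using Sym2.inductionOn with
        | hf a b =>
        have hab : a ≠ b := by simpa using hdiag
        rw [Finset.mem_powersetCard]
        constructor
        · intro x hx
          simp only [sym2Finset_mk, Finset.mem_insert, Finset.mem_singleton] at hx
          rcases hx with rfl | rfl
          · exact hmem _ (by simp)
          · exact hmem _ (by simp)
        · rw [sym2Finset_mk]; exact Finset.card_pair hab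
    _ = W.card.choose 2 := Finset.card_powersetCard 2 W

/-- **Graphs with too many edges cannot appear in the support of a partial composition**:
if a graph `g` on a set `V` of cardinality `n` has strictly more than `C(n-1, 2) + 1`
edges, then `g` is not in the support of any insertion `g₁ ∘_star g₂` with vertex sets of
cardinality at least `2` recomposing `V`. -/
theorem too_many_edges_not_in_support
    (V : Finset α) (n : ℕ) (hn : V.card = n)
    (g : Finset (Sym2 α)) (hg : IsGraphOn V g)
    (hcard : Nat.choose (n - 1) 2 + 1 < g.card) :
    ∀ (V₁ V₂ : Finset α) (star : α), Disjoint V₁ V₂ → star ∈ V₁ →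
      2 ≤ V₁.card → 2 ≤ V₂.card → V₁.erase star ∪ V₂ = V →
      ∀ g₁ g₂ : Finset (Sym2 α), IsGraphOn V₁ g₁ → IsGraphOn V₂ g₂ →
        g ∉ (ins V₂ star g₁ g₂).support := by
  intro V₁ V₂ star hdisj hstar hV₁ hV₂ hunion g₁ g₂ hg₁ hg₂ hmem
  -- extract the reconnection map
  have hval : (ins V₂ star g₁ g₂) g ≠ 0 := Finsupp.mem_support_iff.mp hmem
  rw [ins, Finsupp.finset_sum_apply] at hval
  obtain ⟨f, -, hf⟩ := Finset.exists_ne_zero_of_sum_ne_zero hval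
  have hgeq : g = delG g₁ star ∪ g₂ ∪ newEdges (nbrs g₁ star) V₂ f := by
    by_contra hne
    exact hf (Finsupp.single_eq_of_ne' (Ne.symm hne))
  -- the deleted graph lives on V₁.erase star
  have hdel : IsGraphOn (V₁.erase star) (delG g₁ star) := by
    intro e he
    rw [delG, Finset.mem_filter] at he
    obtain ⟨he1, he2⟩ := he
    refine ⟨(hg₁ e he1).1, fun v hv => ?_⟩
    rw [Finset.mem_erase]
    exact ⟨fun h => he2 (h ▸ hv), (hg₁ e he1).2 v hv⟩
  -- neighbours of star lie in V₁.erase star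
  have hnbrs : nbrs g₁ star ⊆ V₁.erase star := by
    intro v hv
    rw [nbrs, Finset.mem_filter] at hv
    have hmem' := hv.2
    obtain ⟨hdiag, hvv⟩ := hg₁ _ hmem'
    rw [Finset.mem_erase]
    constructor
    · intro h; exact hdiag (by simp [h])
    · exact hvv v (by simp)
  -- cardinality bounds
  set a := (V₁.erase star).card with ha
  set b := V₂.card with hb
  have hacard : a = V₁.card - 1 := by rw [ha, Finset.card_erase_of_mem hstar]
  have ha1 : 1 ≤ a := by omega
  have hn : n = a + b := by
    rw [← hn, ← hunion, Finset.card_union_of_disjoint]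
    exact Finset.disjoint_of_subset_left (Finset.erase_subset _ _) hdisj
  have c1 : (delG g₁ star).card ≤ Nat.choose a 2 := card_le_of_isGraphOn _ _ hdel
  have c2 : g₂.card ≤ Nat.choose b 2 := card_le_of_isGraphOn _ _ hg₂
  have c3 : (newEdges (nbrs g₁ star) V₂ f).card ≤ a := by
    calc (newEdges (nbrs g₁ star) V₂ f).card ≤ (Finset.univ : Finset {v // v ∈ nbrs g₁ star}).card :=
          Finset.card_image_le
      _ = (nbrs g₁ star).card := by simp
      _ ≤ a := Finset.card_le_card hnbrs
  have hle : g.card ≤ Nat.choose a 2 + Nat.choose b 2 + a := by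
    rw [hgeq]
    calc (delG g₁ star ∪ g₂ ∪ newEdges (nbrs g₁ star) V₂ f).card
        ≤ (delG g₁ star ∪ g₂).card + (newEdges (nbrs g₁ star) V₂ f).card :=
          Finset.card_union_le _ _
      _ ≤ (delG g₁ star).card + g₂.card + (newEdges (nbrs g₁ star) V₂ f).card := by
          have := Finset.card_union_le (delG g₁ star) g₂
          omega
      _ ≤ Nat.choose a 2 + Nat.choose b 2 + a := by omega
  have harith := arith_lemma a b ha1 hV₂
  rw [hn] at hcard
  omega
end

section
/- Complete graphs are generators: for every n ≥ 3, the complete graph K_V on a finite set V with |V| = n (the graph whose edges are all unordered pairs of distinct elements of V) does not belong to the support of any insertion g₁ ∘_* g₂, where g₁ is a simple graph on a finite set V₁ with * ∈ V₁ and |V₁| ≥ 2, g₂ is a simple graph on a finite set V₂ disjoint from V₁ with |V₂| ≥ 2, and (V₁ \ {*}) ∪ V₂ = V. (This exhibits an infinite family of graphs that must be generators of the graph insertion operad, supporting the proposition that this operad has infinitely many generators.) -/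
/-!
Common framework: a simple graph on a finite vertex set `V ⊆ α` is a finite set of
unordered pairs (`Sym2 α`) of distinct elements of `V`.  The insertion
`g₁ ∘_star g₂` is an element of the free `ℚ`-module `Finset (Sym2 α) →₀ ℚ`
on the set of edge sets.
-/

open scoped Classical

variable {α : Type*} [DecidableEq α]

/-- The complete graph on `V`: all unordered pairs of distinct elements of `V`. -/
def completeG (V : Finset α) : Finset (Sym2 α) :=
  ((V ×ˢ V).filter fun p => p.1 ≠ p.2).image fun p => s(p.1, p.2)

/-- **Complete graphs are generators**: for `n ≥ 3`, the complete graph on a set `V` of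
cardinality `n` does not belong to the support of any insertion `g₁ ∘_star g₂` with vertex
sets of cardinality at least `2` recomposing `V`. -/
theorem complete_graph_not_in_insertion_support
    (n : ℕ) (hn : 3 ≤ n) (V : Finset α) (hV : V.card = n) :
    ∀ (V₁ V₂ : Finset α) (star : α), Disjoint V₁ V₂ → star ∈ V₁ →
      2 ≤ V₁.card → 2 ≤ V₂.card → V₁.erase star ∪ V₂ = V →
      ∀ g₁ g₂ : Finset (Sym2 α), IsGraphOn V₁ g₁ → IsGraphOn V₂ g₂ →
        completeG V ∉ (ins V₂ star g₁ g₂).support := by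
  intro V₁ V₂ star hdisj hstar h1 h2 hunion g₁ g₂ hg₁ hg₂ hmem
  rw [ins] at hmem
  obtain ⟨f, -, hf⟩ := Finset.mem_biUnion.mp (Finsupp.support_finset_sum hmem)
  have hEq : completeG V = delG g₁ star ∪ g₂ ∪ newEdges (nbrs g₁ star) V₂ f := by
    have := Finsupp.support_single_subset hf
    simpa using this
  -- pick v ∈ V₁.erase star
  obtain ⟨v, hv⟩ : (V₁.erase star).Nonempty := by
    rw [← Finset.card_pos, Finset.card_erase_of_mem hstar]
    omega
  -- pick distinct w₁ w₂ ∈ V₂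
  obtain ⟨w₁, hw₁, w₂, hw₂, hwne⟩ := Finset.one_lt_card.mp (by omega : 1 < V₂.card)
  have hvV₁ : v ∈ V₁ := Finset.mem_of_mem_erase hv
  have hvV₂ : v ∉ V₂ := Finset.disjoint_left.mp hdisj hvV₁
  have key : ∀ w ∈ V₂, s(v, w) ∈ delG g₁ star ∪ g₂ ∪ newEdges (nbrs g₁ star) V₂ f →
      ∃ h : v ∈ nbrs g₁ star, w = (f ⟨v, h⟩).1 := by
    intro w hw hm
    rcases Finset.mem_union.mp hm with h | h
    · rcases Finset.mem_union.mp h with h | h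
      · have := (hg₁ _ (Finset.mem_of_mem_filter _ h)).2 w (by simp)
        exact absurd hw (Finset.disjoint_left.mp hdisj this)
      · have := (hg₂ _ h).2 v (by simp)
        exact absurd this hvV₂
    · obtain ⟨u, -, hu⟩ := Finset.mem_image.mp h
      rcases Sym2.eq_iff.mp hu with ⟨h1, h2⟩ | ⟨h1, h2⟩
      · subst h1
        exact ⟨u.2, by rw [Subtype.coe_eta]; exact h2.symm⟩
      · exact absurd (h2 ▸ (f u).2) hvV₂
  have hmemc : ∀ w ∈ V₂, s(v, w) ∈ completeG V := by
    intro w hw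
    have hvV : v ∈ V := hunion ▸ Finset.mem_union_left _ hv
    have hwV : w ∈ V := hunion ▸ Finset.mem_union_right _ hw
    refine Finset.mem_image.mpr ⟨(v, w), ?_, rfl⟩
    refine Finset.mem_filter.mpr ⟨Finset.mem_product.mpr ⟨hvV, hwV⟩, ?_⟩
    intro hvw
    simp only at hvw
    exact hvV₂ (hvw ▸ hw)
  obtain ⟨hn1, he1⟩ := key w₁ hw₁ (hEq ▸ hmemc w₁ hw₁)
  obtain ⟨hn2, he2⟩ := key w₂ hw₂ (hEq ▸ hmemc w₂ hw₂)
  exact hwne (he1.trans he2.symm)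
end

section
/- Non-freeness relation in the graph insertion operad: let a, b, c, * be four distinct elements, and for distinct x, y let E{x,y} denote the simple graph on {x, y} with the single edge {x, y}. Then E{a,*} ∘_* E{b,c} + E{c,*} ∘_* E{a,b} − E{b,*} ∘_* E{a,c} = 2·P, where P is the simple graph on {a, b, c} with edge set {{a, b}, {b, c}}. (This nontrivial linear relation among insertions of generators shows that the operad of graphs with insertion is not free.) -/
/-!
Common framework: a simple graph on a finite vertex set `V ⊆ α` is a finite set of
unordered pairs (`Sym2 α`) of distinct elements of `V`.  The insertion
`g₁ ∘_star g₂` is an element of the free `ℚ`-module `Finset (Sym2 α) →₀ ℚ`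
on the set of edge sets.
-/

open scoped Classical

variable {α : Type*} [DecidableEq α]

lemma nbrs_single (x star : α) (hxs : x ≠ star) :
    nbrs ({s(x, star)} : Finset (Sym2 α)) star = {x} := by
  ext w
  simp only [nbrs, Finset.mem_filter, Finset.mem_biUnion, Finset.mem_singleton,
    sym2Finset, Sym2.lift_mk, Finset.mem_insert, Sym2.eq, Sym2.rel_iff',
    Prod.mk.injEq, Prod.swap_prod_mk]
  constructor
  · rintro ⟨_, (⟨h1, h2⟩ | h2)⟩
    · exact (hxs h1.symm).elim
    · simpa using h2
  · rintro rfl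
    exact ⟨⟨s(w, star), rfl, by simp⟩, Or.inr (by simp)⟩

lemma ins_single (x star u v : α) (hxs : x ≠ star) (huv : u ≠ v) :
    ins ({u, v} : Finset α) star ({s(x, star)} : Finset (Sym2 α)) {s(u, v)}
      = Finsupp.single ({s(u, v), s(x, u)} : Finset (Sym2 α)) 1
        + Finsupp.single ({s(u, v), s(x, v)} : Finset (Sym2 α)) 1 := by
  have hdel : delG ({s(x, star)} : Finset (Sym2 α)) star = ∅ := by
    simp [delG, Finset.filter_eq_empty_iff]
  haveI hU : Unique {p // p ∈ nbrs ({s(x, star)} : Finset (Sym2 α)) star} :=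
    ⟨⟨⟨x, by rw [nbrs_single x star hxs]; simp⟩⟩, by
      rintro ⟨y, hy⟩
      rw [nbrs_single x star hxs, Finset.mem_singleton] at hy
      exact Subtype.ext hy⟩
  simp only [ins, hdel, Finset.empty_union]
  rw [Fintype.sum_equiv
      (Equiv.funUnique {p // p ∈ nbrs ({s(x, star)} : Finset (Sym2 α)) star}
        {w // w ∈ ({u, v} : Finset α)})
      _ (fun w => Finsupp.single ({s(u, v), s(x, w.1)} : Finset (Sym2 α)) 1) ?_]
  · rw [Finset.sum_coe_sort ({u, v} : Finset α)
      (fun w => Finsupp.single ({s(u, v), s(x, w)} : Finset (Sym2 α)) 1),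
      Finset.sum_pair huv]
  · intro f
    congr 1
    have hdef' : ∀ p : {p // p ∈ nbrs ({s(x, star)} : Finset (Sym2 α)) star}, p.1 = x := by
      rintro ⟨y, hy⟩
      rw [nbrs_single x star hxs, Finset.mem_singleton] at hy
      exact hy
    have hdef := hdef' default
    have : newEdges (nbrs ({s(x, star)} : Finset (Sym2 α)) star) ({u, v} : Finset α) f
        = {s(x, (f default).1)} := by
      simp only [newEdges, Finset.univ_unique, Finset.image_singleton, hdef]
    rw [this]
    ext e
    simp [Equiv.funUnique, or_comm]

/-- **Non-freeness relation in the graph insertion operad**: for distinct `a, b, c, star`,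
`E{a,star} ∘_star E{b,c} + E{c,star} ∘_star E{a,b} − E{b,star} ∘_star E{a,c} = 2·P`,
where `P` is the path `a — b — c`. -/
theorem non_freeness_relation
    (a b c star : α)
    (hab : a ≠ b) (hac : a ≠ c) (hbc : b ≠ c)
    (has : a ≠ star) (hbs : b ≠ star) (hcs : c ≠ star) :
    ins ({b, c} : Finset α) star ({s(a, star)} : Finset (Sym2 α)) {s(b, c)}
      + ins ({a, b} : Finset α) star ({s(c, star)} : Finset (Sym2 α)) {s(a, b)}
      - ins ({a, c} : Finset α) star ({s(b, star)} : Finset (Sym2 α)) {s(a, c)}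
      = Finsupp.single ({s(a, b), s(b, c)} : Finset (Sym2 α)) 2 := by
  rw [ins_single a star b c has hbc, ins_single c star a b hcs hab,
      ins_single b star a c hbs hac]
  have e1 : ({s(b,c), s(a,b)} : Finset (Sym2 α)) = {s(a,b), s(b,c)} := Finset.pair_comm _ _
  have e2 : s(c, a) = s(a, c) := Sym2.eq_swap
  have e3 : s(c, b) = s(b, c) := Sym2.eq_swap
  have e5 : ({s(a,c), s(b,a)} : Finset (Sym2 α)) = {s(a,b), s(a,c)} := by
    rw [Sym2.eq_swap (a := b)]; exact Finset.pair_comm _ _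
  have e6 : ({s(a,c), s(b,c)} : Finset (Sym2 α)) = {s(b,c), s(a,c)} := Finset.pair_comm _ _
  rw [e1, e2, e3, e5, e6]
  rw [show (2 : ℚ) = 1 + 1 by norm_num, Finsupp.single_add]
  abel
end

section
/- The second defining relation of the operad SP holds under graph insertion: let a, b, c, * be four distinct elements; for distinct x, y let E{x,y} denote the simple graph on {x, y} with the single edge {x, y} and let D{x,y} denote the edgeless graph on {x, y}. Then E{a,*} ∘_* D{b,c} = D{c,*} ∘_* E{a,b} + D{b,*} ∘_* E{a,c}, as elements of the free module on simple graphs on {a, b, c}. (This verifies one of the two quadratic relations in the presentation of the binary quadratic operad SP generated by the two-vertex edgeless graph and the two-vertex one-edge graph inside the graph insertion operad.) -/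
/-!
Common framework: a simple graph on a finite vertex set `V ⊆ α` is a finite set of
unordered pairs (`Sym2 α`) of distinct elements of `V`.  The insertion
`g₁ ∘_star g₂` is an element of the free `ℚ`-module `Finset (Sym2 α) →₀ ℚ`
on the set of edge sets.
-/

open scoped Classical

variable {α : Type*} [DecidableEq α]

lemma ins_nbrs_empty (V₂ : Finset α) (star : α) (g₁ g₂ : Finset (Sym2 α))
    (h : nbrs g₁ star = ∅) :
    ins V₂ star g₁ g₂ = Finsupp.single (delG g₁ star ∪ g₂) 1 := by
  haveI he : IsEmpty {v // v ∈ nbrs g₁ star} :=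
    ⟨fun v => Finset.eq_empty_iff_forall_notMem.1 h v.1 v.2⟩
  haveI : Unique ({v // v ∈ nbrs g₁ star} → {w // w ∈ V₂}) := Pi.uniqueOfIsEmpty _
  rw [ins, Fintype.sum_unique]
  have hne : newEdges (nbrs g₁ star) V₂ default = ∅ := by
    rw [newEdges, Finset.univ_eq_empty, Finset.image_empty]
  rw [hne, Finset.union_empty]

lemma ins_nbrs_singleton (V₂ : Finset α) (star x : α) (g₁ g₂ : Finset (Sym2 α))
    (h : nbrs g₁ star = {x}) (hx : x ∈ nbrs g₁ star) :
    ins V₂ star g₁ g₂ = ∑ w : {w // w ∈ V₂},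
      Finsupp.single (delG g₁ star ∪ g₂ ∪ {s(x, w.1)}) 1 := by
  letI hu : Unique {v // v ∈ nbrs g₁ star} :=
    ⟨⟨⟨x, hx⟩⟩, fun v => Subtype.ext (Finset.mem_singleton.1 (h ▸ v.2))⟩
  rw [ins, Fintype.sum_equiv (Equiv.funUnique {v // v ∈ nbrs g₁ star} {w // w ∈ V₂})
    _ (fun w => Finsupp.single (delG g₁ star ∪ g₂ ∪ {s(x, w.1)}) 1)]
  intro f
  congr 2
  rw [newEdges, Finset.univ_unique, Finset.image_singleton]
  simp only [Equiv.funUnique_apply]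
  rfl

/-- **The second defining relation of the operad SP holds under graph insertion**: for
distinct `a, b, c, star`,
`E{a,star} ∘_star D{b,c} = D{c,star} ∘_star E{a,b} + D{b,star} ∘_star E{a,c}`. -/
theorem sp_second_relation
    (a b c star : α)
    (hab : a ≠ b) (hac : a ≠ c) (hbc : b ≠ c)
    (has : a ≠ star) (hbs : b ≠ star) (hcs : c ≠ star) :
    ins ({b, c} : Finset α) star ({s(a, star)} : Finset (Sym2 α)) (∅ : Finset (Sym2 α))
      = ins ({a, b} : Finset α) star (∅ : Finset (Sym2 α)) ({s(a, b)} : Finset (Sym2 α))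
        + ins ({a, c} : Finset α) star (∅ : Finset (Sym2 α))
            ({s(a, c)} : Finset (Sym2 α)) := by
  have hnbrs_empty : nbrs (∅ : Finset (Sym2 α)) star = ∅ := by simp [nbrs]
  have hmem : a ∈ nbrs ({s(a, star)} : Finset (Sym2 α)) star := by
    simp only [nbrs, Finset.mem_filter, Finset.mem_biUnion, Finset.mem_singleton]
    exact ⟨⟨s(a, star), rfl, by simp [sym2Finset]⟩, by rw [Sym2.eq_swap]⟩
  have hnbrs : nbrs ({s(a, star)} : Finset (Sym2 α)) star = {a} := by
    ext v
    simp only [Finset.mem_singleton]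
    constructor
    · intro hv
      have h := (Finset.mem_filter.1 hv).2
      rw [Finset.mem_singleton, Sym2.eq_iff] at h
      rcases h with ⟨hsa, -⟩ | ⟨-, hva⟩
      · exact absurd hsa.symm has
      · exact hva
    · rintro rfl; exact hmem
  have hdel : delG ({s(a, star)} : Finset (Sym2 α)) star = ∅ := by
    rw [delG, Finset.filter_eq_empty_iff]
    intro e he
    rw [Finset.mem_singleton] at he
    subst he
    simp
  rw [ins_nbrs_empty _ _ _ _ hnbrs_empty, ins_nbrs_empty _ _ _ _ hnbrs_empty,
    ins_nbrs_singleton _ _ a _ _ hnbrs hmem, hdel]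
  have hb : b ∈ ({b, c} : Finset α) := by simp
  have hc : c ∈ ({b, c} : Finset α) := by simp
  have huniv : (Finset.univ : Finset {w // w ∈ ({b, c} : Finset α)})
      = {⟨b, hb⟩, ⟨c, hc⟩} := by
    ext w
    rcases w with ⟨w, hw⟩
    simp only [Finset.mem_univ, true_iff, Finset.mem_insert, Finset.mem_singleton]
    rcases Finset.mem_insert.1 hw with rfl | hw
    · left; rfl
    · right; exact Subtype.ext (Finset.mem_singleton.1 hw)
  rw [huniv, Finset.sum_insert (by simp [Subtype.ext_iff, hbc]), Finset.sum_singleton]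
  have hdg : delG (∅ : Finset (Sym2 α)) star = ∅ := by simp [delG]
  simp [hdg]
end

section
/- Each summand of a rooted insertion of rooted trees is a rooted tree: let V₁, V₂ be disjoint finite sets with * ∈ V₁, let (t₁, r₁) be a rooted tree on V₁ and (t₂, r₂) a rooted tree on V₂. With p the neighbour of * on the path from * to r₁ in t₁ (when * ≠ r₁), and C the set of neighbours of * in t₁ other than p (all neighbours of * when * = r₁), for every function f : C → V₂ the graph t' = (t₁ \ {*}) ∪ t₂ ∪ {{v, f(v)} : v ∈ C} ∪ ({{p, r₂}} if * ≠ r₁, else ∅) is a tree on (V₁ \ {*}) ∪ V₂. (This is the well-definedness of the rooted insertion underlying the theorem that rooted connected multigraphs with rooted insertion form an operad, restricted to trees.) -/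
/-!
Common framework: a simple graph on a finite vertex set `V ⊆ α` is a finite set of
unordered pairs (`Sym2 α`) of distinct elements of `V`.  The insertion
`g₁ ∘_star g₂` is an element of the free `ℚ`-module `Finset (Sym2 α) →₀ ℚ`
on the set of edge sets.
-/

open scoped Classical

variable {α : Type*} [DecidableEq α]

/-- The simple graph associated with an edge set. -/
def toSG (g : Finset (Sym2 α)) : SimpleGraph α where
  Adj x y := x ≠ y ∧ s(x, y) ∈ g
  symm := by
    constructor
    intro x y h
    exact ⟨h.1.symm, by rw [Sym2.eq_swap]; exact h.2⟩
  loopless := by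
    constructor
    intro x h
    exact h.1 rfl

/-- The edge set `g` is connected on `V`: any two vertices of `V` are joined by a path. -/
def IsConnOn (V : Finset α) (g : Finset (Sym2 α)) : Prop :=
  ∀ x ∈ V, ∀ y ∈ V, (toSG g).Reachable x y

/-- A tree on `V`: a connected acyclic simple graph on `V`. -/
def IsTreeOn (V : Finset α) (g : Finset (Sym2 α)) : Prop :=
  IsGraphOn V g ∧ IsConnOn V g ∧ (toSG g).IsAcyclic


/-! ### Auxiliary lemmas -/

open SimpleGraph

@[simp] lemma toSG_adj {g : Finset (Sym2 α)} {x y : α} :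
    (toSG g).Adj x y ↔ x ≠ y ∧ s(x, y) ∈ g := Iff.rfl

lemma toSG_mono {g h : Finset (Sym2 α)} (hgh : g ⊆ h) : toSG g ≤ toSG h :=
  fun _ _ ha => ⟨ha.1, hgh ha.2⟩

lemma toSG_union (g h : Finset (Sym2 α)) : toSG (g ∪ h) = toSG g ⊔ toSG h := by
  ext x y
  simp only [toSG_adj, SimpleGraph.sup_adj, Finset.mem_union]
  tauto

lemma toSG_eq_fromEdgeSet (g : Finset (Sym2 α)) :
    toSG g = SimpleGraph.fromEdgeSet (↑g) := by
  ext x y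
  simp only [toSG_adj, SimpleGraph.fromEdgeSet_adj, Finset.mem_coe]
  tauto

lemma toSG_edgeSet {g : Finset (Sym2 α)} {e : Sym2 α} :
    e ∈ (toSG g).edgeSet ↔ ¬ e.IsDiag ∧ e ∈ g := by
  induction e using Sym2.ind with
  | _ x y => simp [SimpleGraph.mem_edgeSet, Sym2.mk_isDiag_iff]

lemma acyclic_mono {G H : SimpleGraph α} (hle : H ≤ G) (hG : G.IsAcyclic) : H.IsAcyclic :=
  fun _ c hc => hG (c.mapLe hle) (hc.mapLe hle)

lemma reach_endpoint {W : Finset α} {g : Finset (Sym2 α)} (hg : IsGraphOn W g) :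
    ∀ {u a : α}, (toSG g).Walk u a → u = a ∨ a ∈ W := by
  intro u a w
  induction w with
  | nil => exact Or.inl rfl
  | @cons u y x h q ih =>
    rcases ih with rfl | ha
    · exact Or.inr ((hg _ h.2).2 _ (Sym2.mem_mk_right _ _))
    · exact Or.inr ha

lemma reach_endpoint' {W : Finset α} {g : Finset (Sym2 α)} (hg : IsGraphOn W g)
    {u a : α} (h : (toSG g).Reachable u a) : u = a ∨ a ∈ W :=
  h.elim fun w => reach_endpoint hg w

lemma reach_sup_confine {G H : SimpleGraph α} :
    ∀ {u x : α}, (G ⊔ H).Walk u x → (∀ a b, H.Adj a b → ¬ G.Reachable u a) →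
      G.Reachable u x := by
  intro u x w
  induction w with
  | nil => exact fun _ => SimpleGraph.Reachable.refl _
  | @cons u y x h q ih =>
    intro hu
    rw [SimpleGraph.sup_adj] at h
    rcases h with hG | hH
    · have r : G.Reachable u y := hG.reachable
      exact r.trans (ih fun a b hab hy => hu a b hab (r.trans hy))
    · exact absurd (SimpleGraph.Reachable.refl _) (hu _ _ hH)

lemma reach_sup_single {H : SimpleGraph α} {a b : α} :
    ∀ {u x : α}, (H ⊔ SimpleGraph.fromEdgeSet {s(a, b)}).Walk u x →
      H.Reachable u x ∨
        ((H.Reachable u a ∨ H.Reachable u b) ∧ (H.Reachable a x ∨ H.Reachable b x)) := by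
  intro u x w
  induction w with
  | nil => exact Or.inl (SimpleGraph.Reachable.refl _)
  | @cons u y x h q ih =>
    rw [SimpleGraph.sup_adj] at h
    rcases h with hH | he
    · have r : H.Reachable u y := hH.reachable
      rcases ih with hx | ⟨hy, hx⟩
      · exact Or.inl (r.trans hx)
      · exact Or.inr ⟨hy.imp r.trans r.trans, hx⟩
    · rw [SimpleGraph.fromEdgeSet_adj, Set.mem_singleton_iff, Sym2.eq_iff] at he
      rcases he.1 with ⟨rfl, rfl⟩ | ⟨rfl, rfl⟩
      · refine Or.inr ⟨Or.inl (SimpleGraph.Reachable.refl _), ?_⟩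
        rcases ih with hx | ⟨_, hx⟩
        · exact Or.inr hx
        · exact hx
      · refine Or.inr ⟨Or.inr (SimpleGraph.Reachable.refl _), ?_⟩
        rcases ih with hx | ⟨_, hx⟩
        · exact Or.inl hx
        · exact hx

lemma acyclic_sup_bridge {G : SimpleGraph α} {a b : α} (hG : G.IsAcyclic) (hab : a ≠ b)
    (hr : ¬ G.Reachable a b) : (G ⊔ SimpleGraph.fromEdgeSet {s(a, b)}).IsAcyclic := by
  rw [SimpleGraph.isAcyclic_iff_forall_adj_isBridge]
  intro v w hvw
  rw [SimpleGraph.isBridge_iff]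
  rw [SimpleGraph.deleteEdges]
  rw [SimpleGraph.sup_adj] at hvw
  rcases hvw with hvw | hvw
  · have hne : s(v, w) ≠ s(a, b) := by
      intro h
      rw [Sym2.eq_iff] at h
      rcases h with ⟨rfl, rfl⟩ | ⟨rfl, rfl⟩
      · exact hr hvw.reachable
      · exact hr hvw.symm.reachable
    have hbr := (SimpleGraph.isAcyclic_iff_forall_adj_isBridge.mp hG hvw)
    rw [SimpleGraph.isBridge_iff] at hbr
    have hbrr := hbr
    have hgeq : (G ⊔ SimpleGraph.fromEdgeSet {s(a, b)}) \ SimpleGraph.fromEdgeSet {s(v, w)}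
        = (G \ SimpleGraph.fromEdgeSet {s(v, w)}) ⊔ SimpleGraph.fromEdgeSet {s(a, b)} := by
      ext x y
      simp only [SimpleGraph.sdiff_adj, SimpleGraph.sup_adj, SimpleGraph.fromEdgeSet_adj,
        Set.mem_singleton_iff]
      constructor
      · rintro ⟨hxy | ⟨he, hne'⟩, hno⟩
        · exact Or.inl ⟨hxy, hno⟩
        · exact Or.inr ⟨he, hne'⟩
      · rintro (⟨hxy, hno⟩ | ⟨he, hne'⟩)
        · exact ⟨Or.inl hxy, hno⟩
        · refine ⟨Or.inr ⟨he, hne'⟩, ?_⟩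
          rintro ⟨heq, -⟩
          exact hne (by rw [← heq, he])
    rw [hgeq]
    intro hreach
    obtain ⟨wk⟩ := hreach
    have hH_le : (G \ SimpleGraph.fromEdgeSet {s(v, w)}) ≤ G := fun _ _ hz => hz.1
    rcases reach_sup_single wk with h0 | ⟨h1, h2⟩
    · exact hbrr h0
    · rcases h1 with h1 | h1 <;> rcases h2 with h2 | h2
      · exact hbrr (h1.trans h2)
      · exact hr (((h1.mono hH_le).symm.trans hvw.reachable).trans (h2.mono hH_le).symm)
      · exact hr (((h2.mono hH_le).trans hvw.symm.reachable).trans (h1.mono hH_le))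
      · exact hbrr (h1.trans h2)
  · have heq : s(v, w) = s(a, b) := hvw.1
    intro hreach
    have hle : (G ⊔ SimpleGraph.fromEdgeSet {s(a, b)}) \ SimpleGraph.fromEdgeSet {s(v, w)}
        ≤ G := by
      intro x y hxy
      obtain ⟨h1 | h1, h2⟩ := hxy
      · exact h1
      · exact absurd (by rw [SimpleGraph.fromEdgeSet_adj] at h1 ⊢; rw [heq]; exact h1) h2
    have hg := hreach.mono hle
    rw [Sym2.eq_iff] at heq
    rcases heq with ⟨rfl, rfl⟩ | ⟨rfl, rfl⟩
    · exact hr hg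
    · exact hr hg.symm

set_option linter.unusedSectionVars false

lemma nbrs_mem {g : Finset (Sym2 α)} {x v : α} (h : v ∈ nbrs g x) : s(x, v) ∈ g :=
  (Finset.mem_filter.mp h).2

lemma mem_nbrs_of_edge {g : Finset (Sym2 α)} {x v : α} (h : s(x, v) ∈ g) : v ∈ nbrs g x := by
  refine Finset.mem_filter.mpr ⟨Finset.mem_biUnion.mpr ⟨s(x, v), h, ?_⟩, h⟩
  simp [sym2Finset]

lemma walk_support_avoid {g : Finset (Sym2 α)} {s : α} (hs : ∀ e ∈ g, s ∉ e) :
    ∀ {u x : α} (w : (toSG g).Walk u x), u ≠ s → s ∉ w.support := by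
  intro u x w
  induction w with
  | nil =>
    intro hu
    rw [SimpleGraph.Walk.support_nil, List.mem_singleton]
    exact fun h => hu h.symm
  | @cons u y x h q ih =>
    intro hu
    rw [SimpleGraph.Walk.support_cons, List.mem_cons]
    push_neg
    have hy : y ≠ s := fun hys => hs _ h.2 (hys ▸ Sym2.mem_mk_right _ _)
    exact ⟨fun hsu => hu hsu.symm, ih hy⟩

lemma nbrs_not_reach {V₁ : Finset α} {t₁ : Finset (Sym2 α)} (ht₁ : IsTreeOn V₁ t₁)
    {star v w : α} (hv : v ∈ nbrs t₁ star) (hw : w ∈ nbrs t₁ star) (hvw : v ≠ w) :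
    ¬ (toSG (delG t₁ star)).Reachable v w := by
  intro hreach
  obtain ⟨q⟩ := hreach
  have hv' := nbrs_mem hv
  have hw' := nbrs_mem hw
  have hvs : v ≠ star := fun h => (ht₁.1 _ hv').1 (Sym2.mk_isDiag_iff.mpr h.symm)
  have hsw : star ≠ w := fun h => (ht₁.1 _ hw').1 (Sym2.mk_isDiag_iff.mpr h)
  have hq1 : ∀ e ∈ q.edges, e ∈ (toSG t₁).edgeSet := by
    intro e he
    have h0 := q.edges_subset_edgeSet he
    rw [toSG_edgeSet] at h0 ⊢
    exact ⟨h0.1, (Finset.mem_filter.mp h0.2).1⟩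
  have hstar_not : star ∉ ((q.transfer (toSG t₁) hq1).toPath : (toSG t₁).Walk v w).support := by
    intro hmem
    have h1 := SimpleGraph.Walk.support_toPath_subset (q.transfer (toSG t₁) hq1) hmem
    rw [SimpleGraph.Walk.support_transfer] at h1
    exact walk_support_avoid (fun e he => (Finset.mem_filter.mp he).2) q hvs h1
  have hadjv : (toSG t₁).Adj v star := ⟨hvs, by rw [Sym2.eq_swap]; exact hv'⟩
  have hadjw : (toSG t₁).Adj star w := ⟨hsw, hw'⟩
  have hQpath : (SimpleGraph.Walk.cons hadjv (SimpleGraph.Walk.cons hadjw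
      SimpleGraph.Walk.nil)).IsPath := by
    rw [SimpleGraph.Walk.isPath_def]
    simp [hvs, hvw, hsw]
  have huniq := SimpleGraph.isAcyclic_iff_path_unique.mp ht₁.2.2
    ((q.transfer (toSG t₁) hq1).toPath) ⟨_, hQpath⟩
  apply hstar_not
  rw [huniq]
  simp

lemma reach_nbr {V₁ : Finset α} {t₁ : Finset (Sym2 α)} (ht₁ : IsTreeOn V₁ t₁)
    {star x : α} (hstar : star ∈ V₁) (hx : x ∈ V₁) (hxs : x ≠ star) :
    ∃ c ∈ nbrs t₁ star, (toSG (delG t₁ star)).Reachable c x := by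
  obtain ⟨w, hw⟩ := (ht₁.2.1 star hstar x hx).some.toPath
  cases w with
  | nil => exact absurd rfl hxs
  | @cons _ c _ h q =>
    rw [SimpleGraph.Walk.cons_isPath_iff] at hw
    obtain ⟨hqpath, hstar_not⟩ := hw
    refine ⟨c, mem_nbrs_of_edge h.2, ?_⟩
    have hq1 : ∀ e ∈ q.edges, e ∈ (toSG (delG t₁ star)).edgeSet := by
      intro e he
      have h0 := q.edges_subset_edgeSet he
      rw [toSG_edgeSet] at h0 ⊢
      refine ⟨h0.1, Finset.mem_filter.mpr ⟨h0.2, ?_⟩⟩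
      induction e using Sym2.ind with
      | _ x₁ x₂ =>
        intro hmem
        rw [Sym2.mem_iff] at hmem
        rcases hmem with rfl | rfl
        · exact hstar_not (q.fst_mem_support_of_mem_edges he)
        · exact hstar_not (q.snd_mem_support_of_mem_edges he)
    exact ⟨q.transfer (toSG (delG t₁ star)) hq1⟩

lemma sup_disjoint_bridge_aux {W₁ W₂ : Finset α} {g₁ g₂ : Finset (Sym2 α)}
    (h₁ : IsGraphOn W₁ g₁) (h₂ : IsGraphOn W₂ g₂) (hd : Disjoint W₁ W₂)
    (a₁ : (toSG g₁).IsAcyclic) {v w : α} (hvw : (toSG g₁).Adj v w) :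
    (toSG g₁ ⊔ toSG g₂).IsBridge s(v, w) := by
  rw [SimpleGraph.isBridge_iff]
  rw [SimpleGraph.deleteEdges]
  have hvW : v ∈ W₁ := (h₁ _ hvw.2).2 v (Sym2.mem_mk_left _ _)
  have hwW : w ∈ W₁ := (h₁ _ hvw.2).2 w (Sym2.mem_mk_right _ _)
  have hbr := (SimpleGraph.isAcyclic_iff_forall_adj_isBridge.mp a₁ hvw)
  rw [SimpleGraph.isBridge_iff] at hbr
  have hEq : (toSG g₁ ⊔ toSG g₂) \ SimpleGraph.fromEdgeSet {s(v, w)}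
      = (toSG g₁ \ SimpleGraph.fromEdgeSet {s(v, w)}) ⊔ toSG g₂ := by
    ext x y
    simp only [SimpleGraph.sdiff_adj, SimpleGraph.sup_adj]
    constructor
    · rintro ⟨h | h, hn⟩
      · exact Or.inl ⟨h, hn⟩
      · exact Or.inr h
    · rintro (⟨h, hn⟩ | h)
      · exact ⟨Or.inl h, hn⟩
      · refine ⟨Or.inr h, fun hadj => ?_⟩
        have hx2 : x ∈ W₂ := (h₂ _ h.2).2 x (Sym2.mem_mk_left _ _)
        rw [SimpleGraph.fromEdgeSet_adj, Set.mem_singleton_iff] at hadj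
        have := hadj.1
        rw [Sym2.eq_iff] at this
        rcases this with ⟨rfl, rfl⟩ | ⟨rfl, rfl⟩
        · exact (Finset.disjoint_left.mp hd hvW) hx2
        · exact (Finset.disjoint_left.mp hd hwW) hx2
  rw [hEq]
  intro hre
  obtain ⟨wk⟩ := hre
  refine hbr (reach_sup_confine wk ?_)
  intro a b hab hva
  have haW2 : a ∈ W₂ := (h₂ _ hab.2).2 a (Sym2.mem_mk_left _ _)
  have hle' : (toSG g₁ \ SimpleGraph.fromEdgeSet {s(v, w)}) ≤ toSG g₁ := fun _ _ hz => hz.1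
  have hva' : (toSG g₁).Reachable v a := hva.mono hle'
  rcases reach_endpoint' h₁ hva' with rfl | haW1
  · exact Finset.disjoint_left.mp hd hvW haW2
  · exact Finset.disjoint_left.mp hd haW1 haW2

lemma acyclic_sup_disjoint {W₁ W₂ : Finset α} {g₁ g₂ : Finset (Sym2 α)}
    (h₁ : IsGraphOn W₁ g₁) (h₂ : IsGraphOn W₂ g₂) (hd : Disjoint W₁ W₂)
    (a₁ : (toSG g₁).IsAcyclic) (a₂ : (toSG g₂).IsAcyclic) :
    (toSG g₁ ⊔ toSG g₂).IsAcyclic := by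
  rw [SimpleGraph.isAcyclic_iff_forall_adj_isBridge]
  intro v w hvw
  rw [SimpleGraph.sup_adj] at hvw
  rcases hvw with h | h
  · exact sup_disjoint_bridge_aux h₁ h₂ hd a₁ h
  · have := sup_disjoint_bridge_aux h₂ h₁ hd.symm a₂ h
    rwa [sup_comm]

lemma main_acyclic {G : SimpleGraph α} (hG : G.IsAcyclic) (ps : Finset (α × α))
    (h1 : ∀ pr ∈ ps, ∀ qr ∈ ps, pr ≠ qr → ¬ G.Reachable pr.1 qr.1)
    (h2 : ∀ pr ∈ ps, ∀ qr ∈ ps, ¬ G.Reachable pr.1 qr.2) :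
    (G ⊔ SimpleGraph.fromEdgeSet (↑(ps.image fun pr => s(pr.1, pr.2)))).IsAcyclic := by
  classical
  revert h1 h2
  induction ps using Finset.induction_on with
  | empty => intro _ _; simpa using hG
  | @insert pr s hpr ih =>
    intro h1 h2
    have hacyc := ih
      (fun a ha b hb hab => h1 a (Finset.mem_insert_of_mem ha) b (Finset.mem_insert_of_mem hb) hab)
      (fun a ha b hb => h2 a (Finset.mem_insert_of_mem ha) b (Finset.mem_insert_of_mem hb))
    have hne : pr.1 ≠ pr.2 := by
      intro h
      exact h2 pr (Finset.mem_insert_self _ _) pr (Finset.mem_insert_self _ _)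
        (h ▸ SimpleGraph.Reachable.refl _)
    have hnr : ¬ (G ⊔ SimpleGraph.fromEdgeSet
        (↑(s.image fun q => s(q.1, q.2)))).Reachable pr.1 pr.2 := by
      intro hre
      obtain ⟨wk⟩ := hre
      refine h2 pr (Finset.mem_insert_self _ _) pr (Finset.mem_insert_self _ _)
        (reach_sup_confine wk ?_)
      intro a b hab hva
      rw [SimpleGraph.fromEdgeSet_adj, Finset.mem_coe, Finset.mem_image] at hab
      obtain ⟨⟨q, hq, hqe⟩, -⟩ := hab
      rw [Sym2.eq_iff] at hqe
      rcases hqe with ⟨h1', h2'⟩ | ⟨h1', h2'⟩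
      · exact h1 pr (Finset.mem_insert_self _ _) q (Finset.mem_insert_of_mem hq)
          (fun h => hpr (h ▸ hq)) (h1' ▸ hva)
      · exact h2 pr (Finset.mem_insert_self _ _) q (Finset.mem_insert_of_mem hq) (h2' ▸ hva)
    have hres := acyclic_sup_bridge hacyc hne hnr
    have hgeq : G ⊔ SimpleGraph.fromEdgeSet (↑((insert pr s).image fun q => s(q.1, q.2)))
        = (G ⊔ SimpleGraph.fromEdgeSet (↑(s.image fun q => s(q.1, q.2)))) ⊔
          SimpleGraph.fromEdgeSet {s(pr.1, pr.2)} := by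
      ext x y
      simp only [SimpleGraph.sup_adj, SimpleGraph.fromEdgeSet_adj, Finset.image_insert,
        Finset.coe_insert, Set.mem_insert_iff, Finset.mem_coe, Set.mem_singleton_iff]
      tauto
    rw [hgeq]
    exact hres

/-- **Each summand of a rooted insertion of rooted trees is a rooted tree**: with `p` the
neighbour of `star` towards the root `r₁` (when `star ≠ r₁`) and `C` the remaining
neighbours of `star`, for every reconnection map `f : C → V₂` the resulting graph is a
tree on `(V₁ \ {star}) ∪ V₂`. -/
theorem rooted_insertion_summand_is_tree
    (V₁ V₂ : Finset α) (star : α)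
    (hd : Disjoint V₁ V₂) (hstar : star ∈ V₁)
    (t₁ t₂ : Finset (Sym2 α)) (r₁ r₂ : α) (hr₁ : r₁ ∈ V₁) (hr₂ : r₂ ∈ V₂)
    (ht₁ : IsTreeOn V₁ t₁) (ht₂ : IsTreeOn V₂ t₂)
    (p : α) (C : Finset α)
    (hp : star ≠ r₁ →
      p ∈ nbrs t₁ star ∧ (toSG (delG t₁ star)).Reachable p r₁ ∧
        C = (nbrs t₁ star).erase p)
    (hC : star = r₁ → C = nbrs t₁ star)
    (f : {v // v ∈ C} → {w // w ∈ V₂}) :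
    IsTreeOn (V₁.erase star ∪ V₂)
      (delG t₁ star ∪ t₂ ∪ newEdges C V₂ f ∪
        (if star = r₁ then (∅ : Finset (Sym2 α)) else {s(p, r₂)})) := by
  classical
  obtain ⟨hg₁, hconn₁, hacyc₁⟩ := ht₁
  obtain ⟨hg₂, hconn₂, hacyc₂⟩ := ht₂
  set D := delG t₁ star with hDdef
  set F := D ∪ t₂ ∪ newEdges C V₂ f ∪
      (if star = r₁ then (∅ : Finset (Sym2 α)) else {s(p, r₂)}) with hFdef
  -- basic membership facts
  have hnbr : ∀ v ∈ nbrs t₁ star, v ∈ V₁ ∧ v ≠ star := by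
    intro v hv
    have h := nbrs_mem hv
    exact ⟨(hg₁ _ h).2 v (Sym2.mem_mk_right _ _),
      fun hvs => (hg₁ _ h).1 (Sym2.mk_isDiag_iff.mpr hvs.symm)⟩
  have hCnbrs : ∀ v ∈ C, v ∈ nbrs t₁ star := by
    by_cases hsr : star = r₁
    · rw [hC hsr]; exact fun v hv => hv
    · rw [(hp hsr).2.2]; exact fun v hv => Finset.mem_of_mem_erase hv
  have hW : Disjoint (V₁.erase star) V₂ :=
    Finset.disjoint_of_subset_left (Finset.erase_subset _ _) hd
  have hDgraph : IsGraphOn (V₁.erase star) D := by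
    intro e he
    rw [hDdef, delG, Finset.mem_filter] at he
    obtain ⟨he₁, hestar⟩ := he
    refine ⟨(hg₁ _ he₁).1, fun v hv => ?_⟩
    exact Finset.mem_erase.mpr ⟨fun h => hestar (h ▸ hv), (hg₁ _ he₁).2 v hv⟩
  -- the attachment pairs
  set ps : Finset (α × α) := (C.attach.image fun v => (v.1, (f v).1)) ∪
      (if star = r₁ then (∅ : Finset (α × α)) else {(p, r₂)}) with hpsdef
  have hps_spec : ∀ pr ∈ ps, pr.1 ∈ nbrs t₁ star ∧ pr.2 ∈ V₂ := by
    intro pr hpr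
    rw [hpsdef, Finset.mem_union] at hpr
    rcases hpr with hpr | hpr
    · obtain ⟨v, hv, rfl⟩ := Finset.mem_image.mp hpr
      exact ⟨hCnbrs _ v.2, (f v).2⟩
    · by_cases hsr : star = r₁
      · rw [if_pos hsr] at hpr; exact absurd hpr (Finset.notMem_empty _)
      · rw [if_neg hsr, Finset.mem_singleton] at hpr
        rw [hpr]
        exact ⟨(hp hsr).1, hr₂⟩
  have hps_ne : ∀ pr ∈ ps, ∀ qr ∈ ps, pr ≠ qr → pr.1 ≠ qr.1 := by
    intro pr hpr qr hqr hne
    rw [hpsdef, Finset.mem_union] at hpr hqr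
    rcases hpr with hpr | hpr <;> rcases hqr with hqr | hqr
    · obtain ⟨v, hv, rfl⟩ := Finset.mem_image.mp hpr
      obtain ⟨w, hw, rfl⟩ := Finset.mem_image.mp hqr
      intro h
      exact hne (by rw [Subtype.ext h])
    · by_cases hsr : star = r₁
      · rw [if_pos hsr] at hqr; exact absurd hqr (Finset.notMem_empty _)
      · rw [if_neg hsr, Finset.mem_singleton] at hqr
        obtain ⟨v, hv, rfl⟩ := Finset.mem_image.mp hpr
        rw [hqr]
        have : v.1 ∈ (nbrs t₁ star).erase p := by rw [← (hp hsr).2.2]; exact v.2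
        exact (Finset.mem_erase.mp this).1
    · by_cases hsr : star = r₁
      · rw [if_pos hsr] at hpr; exact absurd hpr (Finset.notMem_empty _)
      · rw [if_neg hsr, Finset.mem_singleton] at hpr
        obtain ⟨w, hw, rfl⟩ := Finset.mem_image.mp hqr
        rw [hpr]
        have : w.1 ∈ (nbrs t₁ star).erase p := by rw [← (hp hsr).2.2]; exact w.2
        exact fun h => (Finset.mem_erase.mp this).1 h.symm
    · by_cases hsr : star = r₁
      · rw [if_pos hsr] at hpr; exact absurd hpr (Finset.notMem_empty _)
      · rw [if_neg hsr, Finset.mem_singleton] at hpr hqr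
        exact absurd (hpr.trans hqr.symm) hne
  -- the base graph
  have hDt₁ : D ⊆ t₁ := Finset.filter_subset _ _
  have hGbeq : toSG (D ∪ t₂) = toSG D ⊔ toSG t₂ := toSG_union _ _
  have hbase_acyc : (toSG (D ∪ t₂)).IsAcyclic := by
    rw [hGbeq]
    exact acyclic_sup_disjoint hDgraph hg₂ hW (acyclic_mono (toSG_mono hDt₁) hacyc₁) hacyc₂
  have hconf : ∀ {u x : α}, u ∈ V₁.erase star → (toSG (D ∪ t₂)).Reachable u x →
      (toSG D).Reachable u x := by
    intro u x hu hre
    rw [hGbeq] at hre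
    obtain ⟨wk⟩ := hre
    refine reach_sup_confine wk ?_
    intro a b hab hva
    have haV₂ : a ∈ V₂ := (hg₂ _ hab.2).2 a (Sym2.mem_mk_left _ _)
    rcases reach_endpoint' hDgraph hva with rfl | haW
    · exact Finset.disjoint_left.mp hW hu haV₂
    · exact Finset.disjoint_left.mp hW haW haV₂
  have h1 : ∀ pr ∈ ps, ∀ qr ∈ ps, pr ≠ qr → ¬ (toSG (D ∪ t₂)).Reachable pr.1 qr.1 := by
    intro pr hpr qr hqr hne hre
    have hp1 := (hps_spec pr hpr).1
    have hq1 := (hps_spec qr hqr).1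
    have hp1' := hnbr _ hp1
    have hDr : (toSG D).Reachable pr.1 qr.1 :=
      hconf (Finset.mem_erase.mpr ⟨hp1'.2, hp1'.1⟩) hre
    exact nbrs_not_reach ⟨hg₁, hconn₁, hacyc₁⟩ hp1 hq1 (hps_ne pr hpr qr hqr hne) hDr
  have h2 : ∀ pr ∈ ps, ∀ qr ∈ ps, ¬ (toSG (D ∪ t₂)).Reachable pr.1 qr.2 := by
    intro pr hpr qr hqr hre
    have hp1 := hnbr _ (hps_spec pr hpr).1
    have hq2 := (hps_spec qr hqr).2
    have hDr := hconf (Finset.mem_erase.mpr ⟨hp1.2, hp1.1⟩) hre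
    rcases reach_endpoint' hDgraph hDr with heq | hmem
    · exact Finset.disjoint_left.mp hd hp1.1 (heq ▸ hq2)
    · exact Finset.disjoint_left.mp hW hmem hq2
  have hacyc := main_acyclic hbase_acyc ps h1 h2
  -- identification of the total graph
  have hps_image : ps.image (fun pr => s(pr.1, pr.2)) = newEdges C V₂ f ∪
      (if star = r₁ then (∅ : Finset (Sym2 α)) else {s(p, r₂)}) := by
    rw [hpsdef, Finset.image_union, Finset.image_image]
    congr 1
    by_cases hsr : star = r₁ <;> simp [hsr]
  have hFset : F = (D ∪ t₂) ∪ ps.image (fun pr => s(pr.1, pr.2)) := by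
    rw [hps_image, hFdef]
    simp [Finset.union_assoc]
  have hFeq : toSG F = toSG (D ∪ t₂) ⊔
      SimpleGraph.fromEdgeSet (↑(ps.image fun pr => s(pr.1, pr.2))) := by
    rw [hFset, toSG_union, toSG_eq_fromEdgeSet (ps.image _)]
  -- subset facts
  have hDF : D ⊆ F := fun e he => by
    rw [hFset, Finset.mem_union, Finset.mem_union]; exact Or.inl (Or.inl he)
  have ht₂F : t₂ ⊆ F := fun e he => by
    rw [hFset, Finset.mem_union, Finset.mem_union]; exact Or.inl (Or.inr he)
  have hpsF : ps.image (fun pr => s(pr.1, pr.2)) ⊆ F := fun e he => by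
    rw [hFset, Finset.mem_union]; exact Or.inr he
  -- graph structure
  have hgraphF : IsGraphOn (V₁.erase star ∪ V₂) F := by
    intro e he
    rw [hFset, Finset.mem_union, Finset.mem_union] at he
    rcases he with (he | he) | he
    · obtain ⟨h1, h2⟩ := hDgraph e he
      exact ⟨h1, fun v hv => Finset.mem_union_left _ (h2 v hv)⟩
    · obtain ⟨h1, h2⟩ := hg₂ e he
      exact ⟨h1, fun v hv => Finset.mem_union_right _ (h2 v hv)⟩
    · obtain ⟨pr, hpr, rfl⟩ := Finset.mem_image.mp he
      obtain ⟨hpr1, hpr2⟩ := hps_spec pr hpr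
      have hpr1' := hnbr _ hpr1
      have hprE : pr.1 ∈ V₁.erase star := Finset.mem_erase.mpr ⟨hpr1'.2, hpr1'.1⟩
      constructor
      · rw [Sym2.mk_isDiag_iff]
        intro h
        exact Finset.disjoint_left.mp hd hpr1'.1 (h ▸ hpr2)
      · intro v hv
        rw [Sym2.mem_iff] at hv
        rcases hv with rfl | rfl
        · exact Finset.mem_union_left _ hprE
        · exact Finset.mem_union_right _ hpr2
  -- connectivity
  have hreach_r₂ : ∀ x ∈ V₁.erase star ∪ V₂, (toSG F).Reachable x r₂ := by
    have hreachC : ∀ c ∈ nbrs t₁ star, (toSG F).Reachable c r₂ := by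
      intro c hc
      have hcV := hnbr _ hc
      have hCcase : ∀ hcC : c ∈ C, (toSG F).Reachable c r₂ := by
        intro hcC
        have hmemN : s(c, ((f ⟨c, hcC⟩).1 : α)) ∈ newEdges C V₂ f := by
          rw [newEdges]
          exact Finset.mem_image.mpr ⟨⟨c, hcC⟩, Finset.mem_univ _, rfl⟩
        have hmemF : s(c, ((f ⟨c, hcC⟩).1 : α)) ∈ F := by
          have : newEdges C V₂ f ⊆ F := fun e he => by
            rw [hFset, hps_image, Finset.mem_union]
            exact Or.inr (Finset.mem_union_left _ he)
          exact this hmemN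
        have hadj : (toSG F).Adj c ((f ⟨c, hcC⟩).1 : α) :=
          ⟨fun h => Finset.disjoint_left.mp hd hcV.1 (h ▸ (f ⟨c, hcC⟩).2), hmemF⟩
        exact hadj.reachable.trans
          ((hconn₂ _ (f ⟨c, hcC⟩).2 r₂ hr₂).mono (toSG_mono ht₂F))
      by_cases hsr : star = r₁
      · exact hCcase (by rw [hC hsr]; exact hc)
      · rcases eq_or_ne c p with rfl | hcp
        · have hmemF : s(c, r₂) ∈ F := by
            rw [hFdef, Finset.mem_union, if_neg hsr, Finset.mem_singleton]
            exact Or.inr rfl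
          exact SimpleGraph.Adj.reachable
            ⟨fun h => Finset.disjoint_left.mp hd hcV.1 (h ▸ hr₂), hmemF⟩
        · exact hCcase (by rw [(hp hsr).2.2]; exact Finset.mem_erase.mpr ⟨hcp, hc⟩)
    intro x hx
    rcases Finset.mem_union.mp hx with hx | hx
    · obtain ⟨hxs, hxV⟩ := Finset.mem_erase.mp hx
      obtain ⟨c, hc, hcr⟩ := reach_nbr ⟨hg₁, hconn₁, hacyc₁⟩ hstar hxV hxs
      exact ((hcr.symm).mono (toSG_mono hDF)).trans (hreachC c hc)
    · exact (hconn₂ x hx r₂ hr₂).mono (toSG_mono ht₂F)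
  refine ⟨hgraphF, ?_, ?_⟩
  · intro x hx y hy
    exact (hreach_r₂ x hx).trans (hreach_r₂ y hy).symm
  · rw [hFeq]
    exact hacyc
end
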